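/- Let d be a natural number such that the Frac(R)-vector space Frac(R) ⊗_R D has dimension d, and let v_1, …, v_d ∈ D be elements with φ(v_i) = v_i for every i. If the R-linear map R^d → D sending the i-th standard basis vector to v_i is injective, then it is an isomorphism of R-modules. -/

import Mathlib

open scoped TensorProduct

open Submodule

section Aux

variable {R : Type*} [CommRing R] (A : Type*) [CommRing A] [Algebra R A]
variable {D : Type*} [AddCommGroup D] [Module R D]
variable (p s : ℕ) [Fact p.Prime] [CharP A p]

/-- The base change of a Frobenius-semilinear additive map `φ : D → D` to `A ⊗[R] D`. -/
noncomputable def phiBC (φ : D →+ D)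
    (hsemi : ∀ (x : R) (m : D), φ (x • m) = x ^ (p ^ s) • φ m) :
    A ⊗[R] D →+ A ⊗[R] D :=
  TensorProduct.liftAddHom
    { toFun := fun a =>
        { toFun := fun x => iterateFrobenius A p s a ⊗ₜ[R] φ x
          map_zero' := by simp
          map_add' := fun x y => by simp [TensorProduct.tmul_add] }
      map_zero' := by ext x; simp
      map_add' := fun a b => by ext x; simp [TensorProduct.add_tmul] }
    (by
      intro r a x
      simp only [AddMonoidHom.coe_mk, ZeroHom.coe_mk, hsemi]
      rw [Algebra.smul_def, map_mul]
      simp only [iterateFrobenius_def]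
      rw [← map_pow, ← Algebra.smul_def, ← TensorProduct.smul_tmul', TensorProduct.tmul_smul])

@[simp]
lemma phiBC_tmul (φ : D →+ D)
    (hsemi : ∀ (x : R) (m : D), φ (x • m) = x ^ (p ^ s) • φ m) (a : A) (x : D) :
    phiBC A p s φ hsemi (a ⊗ₜ[R] x) = (a ^ (p ^ s)) ⊗ₜ[R] φ x := by
  simp [phiBC, iterateFrobenius_def]

lemma phiBC_smul (φ : D →+ D)
    (hsemi : ∀ (x : R) (m : D), φ (x • m) = x ^ (p ^ s) • φ m) (c : A) (z : A ⊗[R] D) :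
    phiBC A p s φ hsemi (c • z) = c ^ (p ^ s) • phiBC A p s φ hsemi z := by
  induction z using TensorProduct.induction_on with
  | zero => simp
  | tmul a x =>
      rw [TensorProduct.smul_tmul', phiBC_tmul, phiBC_tmul, TensorProduct.smul_tmul',
        smul_eq_mul, smul_eq_mul, mul_pow]
  | add y z hy hz => rw [smul_add, map_add, map_add, hy, hz, smul_add]

end Aux

set_option maxHeartbeats 1600000 in
/-- Let `R` be an integral domain of characteristic `p`, `r = p ^ s` with
`s ≥ 1`, `D` a finitely generated projective `R`-module, and `φ : D → D` an additive map,
semilinear for the `r`-power Frobenius, whose image generates `D` as an `R`-module (étaleness).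
If the `Frac(R)`-vector space `Frac(R) ⊗_R D` has dimension `d` and `v : Fin d → D` is a family
of `φ`-fixed vectors such that the `R`-linear map `R ^ d → D` sending the `i`-th standard basis
vector to `v i` is injective, then this map is an isomorphism (i.e. bijective). -/
theorem statement9 (p s : ℕ) [Fact p.Prime] (hs : 1 ≤ s)
    (R : Type*) [CommRing R] [IsDomain R] [CharP R p]
    (D : Type*) [AddCommGroup D] [Module R D] [Module.Finite R D] [Module.Projective R D]
    (φ : D →+ D) (hsemi : ∀ (x : R) (m : D), φ (x • m) = x ^ (p ^ s) • φ m)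
    (hetale : Submodule.span R (Set.range ⇑φ) = ⊤)
    (d : ℕ)
    (hd : Module.finrank (FractionRing R) ((FractionRing R) ⊗[R] D) = d)
    (v : Fin d → D) (hv : ∀ i, φ (v i) = v i)
    (hinj : Function.Injective ⇑(Fintype.linearCombination R v)) :
    Function.Bijective ⇑(Fintype.linearCombination R v) := by
  classical
  refine ⟨hinj, ?_⟩
  -- It suffices to show that every `x : D` lies in the span of the `v i`.
  have hps2 : 2 ≤ p ^ s := by
    have hp2 : 2 ≤ p := (Fact.out : p.Prime).two_le
    calc 2 ≤ p := hp2
      _ = p ^ 1 := (pow_one p).symm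
      _ ≤ p ^ s := Nat.pow_le_pow_right (by omega) hs
  -- local statement at each maximal ideal
  have hloc : ∀ (m : Ideal R) (_ : m.IsMaximal) (x : D),
      ∃ b : R, b ∉ m ∧ b • x ∈ Submodule.span R (Set.range v) := by
    intro m hm x
    set A := Localization.AtPrime m with hA
    haveI : IsDomain A := IsLocalization.isDomain_localization m.primeCompl_le_nonZeroDivisors
    have halg : Function.Injective (algebraMap R A) :=
      IsLocalization.injective A m.primeCompl_le_nonZeroDivisors
    haveI : CharP A p := charP_of_injective_algebraMap halg p
    haveI : Module.FinitePresentation R D := Module.finitePresentation_of_projective R D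
    haveI : Module.Free A (A ⊗[R] D) := Module.free_of_flat_of_isLocalRing
    -- the natural injection `D → A ⊗ D`
    set jD : D →ₗ[R] A ⊗[R] D := TensorProduct.mk R A D 1 with hjDdef
    have hjDapp : ∀ z : D, jD z = (1 : A) ⊗ₜ[R] z := fun z => rfl
    have hjD : Function.Injective jD := by
      have h2 : Function.Injective (LinearMap.rTensor D (Algebra.linearMap R A)) :=
        Module.Flat.rTensor_preserves_injective_linearMap _ halg
      have hco : ∀ z : D,
          jD z = LinearMap.rTensor D (Algebra.linearMap R A) ((TensorProduct.lid R D).symm z) := by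
        intro z
        simp [hjDapp]
      intro z₁ z₂ hz
      rw [hco, hco] at hz
      exact (TensorProduct.lid R D).symm.injective (h2 hz)
    -- a basis of `A ⊗ D` indexed by `Fin d`
    set K := FractionRing R with hK
    let b₀ := Module.Free.chooseBasis A (A ⊗[R] D)
    have hcard : Fintype.card (Module.Free.ChooseBasisIndex A (A ⊗[R] D)) = d := by
      let bK := b₀.baseChange K
      have h1 : Module.finrank K (K ⊗[A] (A ⊗[R] D))
          = Fintype.card (Module.Free.ChooseBasisIndex A (A ⊗[R] D)) :=
        Module.finrank_eq_card_basis bK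
      have h2 : Module.finrank K (K ⊗[A] (A ⊗[R] D)) = Module.finrank K (K ⊗[R] D) :=
        (TensorProduct.AlgebraTensorModule.cancelBaseChange R A K K D).finrank_eq
      rw [h2, hd] at h1
      omega
    let b := b₀.reindex (Fintype.equivFinOfCardEq hcard)
    -- the base-changed semilinear map and the fixed vectors
    set φA := phiBC A p s φ hsemi with hφA
    set w : Fin d → A ⊗[R] D := fun i => (1 : A) ⊗ₜ[R] v i with hw
    have hwfix : ∀ i, φA (w i) = w i := by
      intro i
      rw [hw]
      simp only [hφA, phiBC_tmul, one_pow, hv]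
    -- the matrix of the `w` in the basis `b`, and the matrix of `φA`
    set Vmat : Matrix (Fin d) (Fin d) A := b.toMatrix w with hVmat
    set C : Matrix (Fin d) (Fin d) A := b.toMatrix (fun j => φA (b j)) with hC
    have hwexp : ∀ i, w i = ∑ j, Vmat j i • b j := fun i => (b.sum_repr (w i)).symm
    have hwexp2 : ∀ i, w i = ∑ j, Vmat j i ^ (p ^ s) • φA (b j) := by
      intro i
      conv_lhs => rw [← hwfix i, hwexp i]
      rw [map_sum]
      exact Finset.sum_congr rfl fun j _ => by rw [phiBC_smul]
    have hVC : Vmat = C * Vmat.map (iterateFrobenius A p s) := by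
      ext k i
      have h1 : Vmat k i = b.repr (w i) k := rfl
      rw [h1, Matrix.mul_apply]
      conv_lhs => rw [hwexp2 i]
      rw [map_sum, Finsupp.finset_sum_apply]
      refine Finset.sum_congr rfl fun j _ => ?_
      rw [map_smul, Finsupp.smul_apply, smul_eq_mul, Matrix.map_apply, iterateFrobenius_def]
      rw [mul_comm]
      rfl
    have hdet : Vmat.det = C.det * Vmat.det ^ (p ^ s) := by
      have h := congrArg Matrix.det hVC
      have h2 := RingHom.map_det (iterateFrobenius A p s) Vmat
      rw [RingHom.mapMatrix_apply] at h2
      rwa [Matrix.det_mul, ← h2, iterateFrobenius_def] at h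
    -- clearing denominators
    have hclear : ∀ c : Fin d → A, ∃ (bb : m.primeCompl) (a : Fin d → R),
        ∀ i, algebraMap R A (a i) = (bb : R) • c i := by
      intro c
      obtain ⟨bb, hbb⟩ := IsLocalization.exist_integer_multiples_of_finite m.primeCompl c
      choose a ha using hbb
      exact ⟨bb, a, ha⟩
    have hjw : ∀ aR : Fin d → R,
        ∑ i, algebraMap R A (aR i) • w i = jD (∑ i, aR i • v i) := by
      intro aR
      rw [map_sum]
      refine Finset.sum_congr rfl fun i _ => ?_
      rw [algebraMap_smul, map_smul]
      rfl
    -- `det Vmat ≠ 0` from injectivity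
    have hdet0 : Vmat.det ≠ 0 := by
      intro h0
      obtain ⟨c, hc0, hcv⟩ := Matrix.exists_mulVec_eq_zero_iff.mpr h0
      have hsum : ∑ i, c i • w i = 0 := by
        apply b.repr.injective
        rw [map_sum, map_zero]
        ext k
        have hk := congrFun hcv k
        simp only [Matrix.mulVec, dotProduct, Pi.zero_apply] at hk
        simp only [Finsupp.finset_sum_apply, Finsupp.coe_zero, Pi.zero_apply,
          Finsupp.zero_apply]
        have h2 : ∑ i, (b.repr (c i • w i)) k = ∑ i, Vmat k i * c i := by
          refine Finset.sum_congr rfl fun i _ => ?_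
          rw [map_smul, Finsupp.smul_apply, smul_eq_mul, mul_comm]
          rfl
        rw [h2, ← hk]
      obtain ⟨bb, a, ha⟩ := hclear c
      have hzero : jD (∑ i, a i • v i) = 0 := by
        rw [← hjw]
        have : ∀ i, algebraMap R A (a i) • w i = (bb : R) • (c i • w i) := by
          intro i
          rw [ha i, smul_assoc]
        simp_rw [this]
        rw [← Finset.smul_sum, hsum, smul_zero]
      have ha0 : ∑ i, a i • v i = 0 := by
        apply hjD
        rw [hzero, map_zero]
      have haz : a = 0 := by
        apply hinj
        rw [map_zero, Fintype.linearCombination_apply]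
        exact ha0
      have hbbne : algebraMap R A (bb : R) ≠ 0 := by
        intro h
        have : (bb : R) = 0 := halg (by rw [h, map_zero])
        exact bb.2 (this ▸ m.zero_mem)
      apply hc0
      funext i
      have := ha i
      rw [haz] at this
      simp only [Pi.zero_apply, map_zero] at this
      rw [Algebra.smul_def] at this
      rcases mul_eq_zero.mp this.symm with h | h
      · exact absurd h hbbne
      · exact h
    -- `det Vmat` is a unit
    obtain ⟨k, hk⟩ : ∃ k, p ^ s = k + 2 := ⟨p ^ s - 2, by omega⟩
    have hVu : IsUnit Vmat.det := by
      have h1 : Vmat.det * 1 = Vmat.det * (C.det * Vmat.det ^ (k + 1)) := by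
        rw [mul_one]
        nth_rewrite 1 [hdet]
        rw [hk]
        ring
      have h2 : 1 = C.det * Vmat.det ^ (k + 1) := mul_left_cancel₀ hdet0 h1
      exact IsUnit.of_mul_eq_one (C.det * Vmat.det ^ k) (by rw [h2]; ring)
    -- hence the `w i` span `A ⊗ D`
    obtain ⟨U, hWV⟩ : ∃ U, Vmat * U = 1 := ⟨Vmat⁻¹, Matrix.mul_nonsing_inv _ hVu⟩
    have hbmem : ∀ k0, b k0 ∈ Submodule.span A (Set.range w) := by
      intro k0
      have hb0 : ∑ i, U i k0 • w i = b k0 := by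
        calc ∑ i, U i k0 • w i
            = ∑ i, ∑ j, U i k0 • (Vmat j i • b j) := by
              refine Finset.sum_congr rfl fun i _ => ?_
              rw [hwexp i, Finset.smul_sum]
          _ = ∑ j, ∑ i, U i k0 • (Vmat j i • b j) := Finset.sum_comm
          _ = ∑ j, (∑ i, Vmat j i * U i k0) • b j := by
              refine Finset.sum_congr rfl fun j _ => ?_
              rw [Finset.sum_smul]
              refine Finset.sum_congr rfl fun i _ => ?_
              rw [smul_smul, mul_comm]
          _ = ∑ j, (Vmat * U) j k0 • b j := by
              refine Finset.sum_congr rfl fun j _ => ?_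
              rw [Matrix.mul_apply]
          _ = b k0 := by
              rw [hWV]
              simp only [Matrix.one_apply, ite_smul, one_smul, zero_smul]
              rw [Finset.sum_ite_eq' Finset.univ k0 b]
              exact if_pos (Finset.mem_univ k0)
      rw [← hb0]
      exact sum_mem fun i _ => smul_mem _ _ (subset_span ⟨i, rfl⟩)
    have hspan : Submodule.span A (Set.range w) = ⊤ := by
      rw [eq_top_iff, ← b.span_eq]
      rw [span_le]
      rintro _ ⟨k0, rfl⟩
      exact hbmem k0
    -- conclude locally
    have hx : (1 : A) ⊗ₜ[R] x ∈ Submodule.span A (Set.range w) := by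
      rw [hspan]; exact mem_top
    rw [mem_span_range_iff_exists_fun] at hx
    obtain ⟨c, hc⟩ := hx
    obtain ⟨bb, a, ha⟩ := hclear c
    have hkey : jD (∑ i, a i • v i) = jD ((bb : R) • x) := by
      rw [← hjw]
      have : ∀ i, algebraMap R A (a i) • w i = (bb : R) • (c i • w i) := by
        intro i
        rw [ha i, smul_assoc]
      simp_rw [this]
      rw [← Finset.smul_sum, hc, map_smul]
      rfl
    have hxx : (bb : R) • x = ∑ i, a i • v i := (hjD hkey).symm
    exact ⟨(bb : R), bb.2, hxx ▸ sum_mem fun i _ => smul_mem _ _ (subset_span ⟨i, rfl⟩)⟩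
  -- globalize
  have hall : ∀ x : D, x ∈ Submodule.span R (Set.range v) := by
    intro x
    let I : Ideal R := (Submodule.span R (Set.range v)).comap (LinearMap.toSpanSingleton R D x)
    have hI : I = ⊤ := by
      by_contra hne
      obtain ⟨m, hm, hle⟩ := I.exists_le_maximal hne
      obtain ⟨bb, hbb, hbx⟩ := hloc m hm x
      exact hbb (hle hbx)
    have h1 : (1 : R) ∈ I := I.eq_top_iff_one.mp hI
    have h2 : LinearMap.toSpanSingleton R D x 1 ∈ Submodule.span R (Set.range v) :=
      Submodule.mem_comap.mp h1
    simpa [LinearMap.toSpanSingleton_apply] using h2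
  intro y
  have := hall y
  rw [mem_span_range_iff_exists_fun] at this
  obtain ⟨c, hc⟩ := this
  exact ⟨c, by rw [Fintype.linearCombination_apply]; exact hc⟩
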